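/- Let T_m denote the Chebyshev polynomial of the first kind of degree m. For ω₀ > 1 and x = m·arccosh(ω₀), the quantity α_m = T_m(ω₀)T_m''(ω₀)/T_m'(ω₀)² equals (1/tanh(x))·(1/tanh(x) − (1/x)·(ω₀/√(ω₀²−1))·arccosh(ω₀)). -/

import Mathlib

open Polynomial Polynomial.Chebyshev

lemma T_real_cosh (m : ℕ) (t : ℝ) : (T ℝ m).eval (Real.cosh t) = Real.cosh (m * t) := by
  have h := Polynomial.Chebyshev.T_complex_cos ((t : ℂ) * Complex.I) m
  rw [Complex.cos_mul_I] at h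
  have h2 : (((m : ℤ) : ℂ)) * ((t : ℂ) * Complex.I) = ((m * t : ℝ) : ℂ) * Complex.I := by
    push_cast; ring
  rw [h2, Complex.cos_mul_I] at h
  rw [← Complex.ofReal_cosh, ← Complex.ofReal_cosh, ← complex_ofReal_eval_T] at h
  exact_mod_cast h

lemma dT_real_cosh (m : ℕ) (t : ℝ) :
    (derivative (T ℝ m)).eval (Real.cosh t) * Real.sinh t = m * Real.sinh (m * t) := by
  have hl : HasDerivAt (fun s => (T ℝ m).eval (Real.cosh s))
      ((derivative (T ℝ m)).eval (Real.cosh t) * Real.sinh t) t :=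
    (Polynomial.hasDerivAt _ _).comp t (Real.hasDerivAt_cosh t)
  have hin : HasDerivAt (fun s : ℝ => (m : ℝ) * s) (m : ℝ) t := by
    simpa using (hasDerivAt_id t).const_mul (m : ℝ)
  have hr : HasDerivAt (fun s : ℝ => Real.cosh (m * s)) (Real.sinh (m * t) * m) t :=
    (Real.hasDerivAt_cosh (m * t)).comp t hin
  have hfun : (fun s => (T ℝ m).eval (Real.cosh s)) = fun s : ℝ => Real.cosh (m * s) :=
    funext (T_real_cosh m)
  rw [hfun] at hl
  rw [hl.unique hr]; ring

lemma ddT_real_cosh (m : ℕ) (t : ℝ) :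
    (derivative (derivative (T ℝ m))).eval (Real.cosh t) * Real.sinh t * Real.sinh t
      + (derivative (T ℝ m)).eval (Real.cosh t) * Real.cosh t
      = m * (m * Real.cosh (m * t)) := by
  have hl : HasDerivAt (fun s => (derivative (T ℝ m)).eval (Real.cosh s) * Real.sinh s)
      ((derivative (derivative (T ℝ m))).eval (Real.cosh t) * Real.sinh t * Real.sinh t
        + (derivative (T ℝ m)).eval (Real.cosh t) * Real.cosh t) t :=
    (((Polynomial.hasDerivAt _ _).comp t (Real.hasDerivAt_cosh t)).mul (Real.hasDerivAt_sinh t))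
  have hin : HasDerivAt (fun s : ℝ => (m : ℝ) * s) (m : ℝ) t := by
    simpa using (hasDerivAt_id t).const_mul (m : ℝ)
  have hr : HasDerivAt (fun s : ℝ => (m : ℝ) * Real.sinh (m * s))
      ((m : ℝ) * (Real.cosh (m * t) * m)) t :=
    (((Real.hasDerivAt_sinh (m * t)).comp t hin).const_mul (m : ℝ))
  have hfun : (fun s => (derivative (T ℝ m)).eval (Real.cosh s) * Real.sinh s)
      = fun s : ℝ => (m : ℝ) * Real.sinh (m * s) := funext (dT_real_cosh m)
  rw [hfun] at hl
  rw [hl.unique hr]; ring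

/-- Inverse hyperbolic cosine. -/
noncomputable def arcosh (x : ℝ) : ℝ := Real.log (x + Real.sqrt (x ^ 2 - 1))

theorem stmt_14 (m : ℕ) (hm : 0 < m) (ω₀ : ℝ) (h : 1 < ω₀) :
    (T ℝ m).eval ω₀ * (derivative (derivative (T ℝ m))).eval ω₀ /
        ((derivative (T ℝ m)).eval ω₀) ^ 2 =
      (1 / Real.tanh (m * arcosh ω₀)) *
        (1 / Real.tanh (m * arcosh ω₀) -
          1 / (m * arcosh ω₀) * (ω₀ / Real.sqrt (ω₀ ^ 2 - 1)) * arcosh ω₀) := by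
  set θ := arcosh ω₀ with hθ
  set r := Real.sqrt (ω₀ ^ 2 - 1) with hrdef
  have hr2 : r ^ 2 = ω₀ ^ 2 - 1 := Real.sq_sqrt (by nlinarith)
  have hrpos : 0 < r := Real.sqrt_pos.mpr (by nlinarith)
  have hsum : (0:ℝ) < ω₀ + r := by linarith
  have hexp : Real.exp θ = ω₀ + r := Real.exp_log hsum
  have hexpneg : Real.exp (-θ) = ω₀ - r := by
    rw [Real.exp_neg, hexp]
    rw [inv_eq_iff_eq_inv]
    have hne : ω₀ - r ≠ 0 := by nlinarith [Real.sq_sqrt (show (0:ℝ) ≤ ω₀^2-1 by nlinarith)]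
    field_simp
    nlinarith
  have hcosh : Real.cosh θ = ω₀ := by rw [Real.cosh_eq, hexp, hexpneg]; ring
  have hsinh : Real.sinh θ = r := by rw [Real.sinh_eq, hexp, hexpneg]; ring
  have hθpos : 0 < θ := by
    have : Real.exp 0 < Real.exp θ := by rw [Real.exp_zero, hexp]; linarith
    exact (Real.exp_lt_exp).mp this
  have hmθ : 0 < (m : ℝ) * θ := by positivity
  set S := Real.sinh ((m : ℝ) * θ) with hS
  set C := Real.cosh ((m : ℝ) * θ) with hC
  have hSpos : 0 < S := Real.sinh_pos_iff.mpr hmθ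
  have hCpos : 0 < C := Real.cosh_pos _
  have h0 : (T ℝ m).eval ω₀ = C := by
    have := T_real_cosh m θ; rw [hcosh] at this; exact this
  have h1 : (derivative (T ℝ m)).eval ω₀ * r = m * S := by
    have := dT_real_cosh m θ; rw [hcosh, hsinh] at this; exact this
  have h2 : (derivative (derivative (T ℝ m))).eval ω₀ * r * r
      + (derivative (T ℝ m)).eval ω₀ * ω₀ = m * (m * C) := by
    have := ddT_real_cosh m θ; rw [hcosh, hsinh] at this; exact this
  have hm' : (0:ℝ) < m := by exact_mod_cast hm
  have hdT : (derivative (T ℝ m)).eval ω₀ = m * S / r := by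
    field_simp at h1 ⊢; linarith
  have hddT : (derivative (derivative (T ℝ m))).eval ω₀ = (m * (m * C) - (m * S / r) * ω₀) / (r * r) := by
    rw [hdT] at h2; field_simp at h2 ⊢; linarith
  rw [h0, hdT, hddT, Real.tanh_eq_sinh_div_cosh, ← hS, ← hC]
  have hdT0 : (m : ℝ) * S / r ≠ 0 := by positivity
  field_simp
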